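/- For every pairwise reciprocal matrix A of size n, the WLS objective f : (Fin n → ℝ) → ℝ is Fréchet differentiable at every point w, with derivative given by the linear map v ↦ 2 · ((Ḡ.mulVec w) ⬝ᵥ v); in particular, for each coordinate k, the partial derivative of f at w is ∂f/∂w_k = 2·[((n−1) + ∑_{i ≠ k} (A i k)²)·(w k) − ∑_{i ≠ k} (A i k + A k i)·(w i)]. -/

import Mathlib

open Matrix BigOperators

/-- A pairwise reciprocal matrix (PRM): all entries positive and `A i j * A j i = 1`. -/
def IsPRM {n : ℕ} (A : Matrix (Fin n) (Fin n) ℝ) : Prop :=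
  ∀ i j, 0 < A i j ∧ A i j * A j i = 1

/-- The matrix `Ḡ` with diagonal `(n-1) + ∑_{k ≠ i} (A k i)^2` and
off-diagonal `-(A i j + A j i)`. -/
noncomputable def Gbar {n : ℕ} (A : Matrix (Fin n) (Fin n) ℝ) :
    Matrix (Fin n) (Fin n) ℝ :=
  Matrix.of fun i j =>
    if i = j then ((n : ℝ) - 1) + ∑ k ∈ Finset.univ.filter (fun k => k ≠ i), (A k i) ^ 2
    else -(A i j + A j i)

/-- The all-ones matrix `J`. -/
noncomputable def Jmat (n : ℕ) : Matrix (Fin n) (Fin n) ℝ :=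
  Matrix.of fun _ _ => 1

/-- `G = Ḡ + J`. -/
noncomputable def Gmat {n : ℕ} (A : Matrix (Fin n) (Fin n) ℝ) :
    Matrix (Fin n) (Fin n) ℝ :=
  Gbar A + Jmat n

/-- The weighted least squares objective `f(w) = ∑ i ∑ j (w i - A i j * w j)^2`. -/
noncomputable def wls {n : ℕ} (A : Matrix (Fin n) (Fin n) ℝ) (w : Fin n → ℝ) : ℝ :=
  ∑ i, ∑ j, (w i - A i j * w j) ^ 2
lemma gbar_mulVec {n : ℕ} (A : Matrix (Fin n) (Fin n) ℝ) (hA : IsPRM A)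
    (w : Fin n → ℝ) (i : Fin n) :
    (Gbar A).mulVec w i =
      (n : ℝ) * w i + (∑ k, A k i ^ 2) * w i - ∑ j, (A i j + A j i) * w j := by
  have haii : A i i = 1 := by
    have h1 := (hA i i).1
    have h2 := (hA i i).2
    nlinarith
  have hsplit : ∀ f : Fin n → ℝ, ∑ j, f j = f i + ∑ j ∈ Finset.univ.erase i, f j := by
    intro f
    exact (Finset.add_sum_erase Finset.univ f (Finset.mem_univ i)).symm
  have hfil : (Finset.univ.filter (fun k : Fin n => k ≠ i)) = Finset.univ.erase i :=
    Finset.filter_ne' Finset.univ i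
  have hmv : (Gbar A).mulVec w i = ∑ j, Gbar A i j * w j := by
    simp [Matrix.mulVec, dotProduct]
  rw [hmv, hsplit (fun j => Gbar A i j * w j), hsplit (fun k => A k i ^ 2),
    hsplit (fun j => (A i j + A j i) * w j)]
  have hdiag : Gbar A i i = ((n : ℝ) - 1) + ∑ k ∈ Finset.univ.erase i, (A k i) ^ 2 := by
    simp [Gbar, hfil]
  have hoff : ∑ j ∈ Finset.univ.erase i, Gbar A i j * w j
      = -∑ j ∈ Finset.univ.erase i, (A i j + A j i) * w j := by
    rw [← Finset.sum_neg_distrib]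
    apply Finset.sum_congr rfl
    intro j hj
    have hne : i ≠ j := fun h => (Finset.ne_of_mem_erase hj) h.symm
    simp [Gbar, hne]
    ring
  rw [hdiag, hoff, haii]
  ring

/-- the WLS objective is Fréchet differentiable at every `w`, with
derivative `v ↦ 2 * ((Ḡ.mulVec w) ⬝ᵥ v)`; in particular the `k`-th partial derivative
is `2 * (((n−1) + ∑_{i ≠ k} (A i k)²) * w k − ∑_{i ≠ k} (A i k + A k i) * w i)`. -/
theorem wls_fderiv {n : ℕ} (hn : 1 ≤ n)
    (A : Matrix (Fin n) (Fin n) ℝ) (hA : IsPRM A) (w : Fin n → ℝ) :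
    DifferentiableAt ℝ (wls A) w ∧
    (∀ v : Fin n → ℝ, fderiv ℝ (wls A) w v = 2 * ((Gbar A).mulVec w ⬝ᵥ v)) ∧
    (∀ k : Fin n, fderiv ℝ (wls A) w (Pi.single k 1) =
      2 * ((((n : ℝ) - 1) + ∑ i ∈ Finset.univ.filter (fun i => i ≠ k), (A i k) ^ 2) * w k
        - ∑ i ∈ Finset.univ.filter (fun i => i ≠ k), (A i k + A k i) * w i)) := by
  classical
  set φ : Fin n → Fin n → ((Fin n → ℝ) →L[ℝ] ℝ) :=
    fun i j => ContinuousLinearMap.proj i - (A i j) • ContinuousLinearMap.proj j with hφ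
  have hterm : ∀ i j : Fin n, HasFDerivAt (fun w : Fin n → ℝ => (w i - A i j * w j)^2)
      (((2:ℝ) * (w i - A i j * w j)) • (φ i j)) w := by
    intro i j
    have h0 : HasFDerivAt (fun w : Fin n → ℝ => w i - A i j * w j) (φ i j) w := by
      have h1 := (φ i j).hasFDerivAt (x := w)
      have e : ⇑(φ i j) = fun w : Fin n → ℝ => w i - A i j * w j := by
        funext v; simp [hφ]
      rwa [e] at h1
    have h := h0.fun_mul h0
    have e2 : (fun w : Fin n → ℝ => (w i - A i j * w j)^2)
        = fun w : Fin n → ℝ => (w i - A i j * w j) * (w i - A i j * w j) := by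
      funext x; ring
    rw [e2]
    refine h.congr_fderiv ?_
    ext v
    simp [hφ]
    ring
  set D : (Fin n → ℝ) →L[ℝ] ℝ :=
    ∑ i : Fin n, ∑ j : Fin n, ((2:ℝ) * (w i - A i j * w j)) • (φ i j) with hD
  have hder : HasFDerivAt (wls A) D w := by
    have h := HasFDerivAt.fun_sum (fun i (_ : i ∈ Finset.univ) =>
      HasFDerivAt.fun_sum (fun j (_ : j ∈ Finset.univ) => hterm i j))
    have e : (fun w : Fin n → ℝ => ∑ i, ∑ j, (w i - A i j * w j)^2) = wls A := by
      funext x; simp [wls]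
    rwa [e] at h
  have hDval : ∀ v : Fin n → ℝ, D v = 2 * ((Gbar A).mulVec w ⬝ᵥ v) := by
    intro v
    have hDv : D v = ∑ i, ∑ j, (2 * (w i - A i j * w j)) * (v i - A i j * v j) := by
      simp [hD, hφ, ContinuousLinearMap.sum_apply, mul_comm]
    rw [hDv]
    have e1 : ∀ i j : Fin n, (2 * (w i - A i j * w j)) * (v i - A i j * v j)
        = (2*w i*v i + 2*(A j i)^2*w i*v i - 2*(A i j + A j i)*w j*v i)
          + ((2*(A i j)^2*w j*v j - 2*A i j*w i*v j) - (2*(A j i)^2*w i*v i - 2*A j i*w j*v i)) := by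
      intro i j; ring
    calc ∑ i, ∑ j, (2 * (w i - A i j * w j)) * (v i - A i j * v j)
        = ∑ i, ∑ j, ((2*w i*v i + 2*(A j i)^2*w i*v i - 2*(A i j + A j i)*w j*v i)
          + ((2*(A i j)^2*w j*v j - 2*A i j*w i*v j) - (2*(A j i)^2*w i*v i - 2*A j i*w j*v i))) := by
          exact Finset.sum_congr rfl fun i _ => Finset.sum_congr rfl fun j _ => e1 i j
      _ = (∑ i, ∑ j, (2*w i*v i + 2*(A j i)^2*w i*v i - 2*(A i j + A j i)*w j*v i))
          + ((∑ i, ∑ j, (2*(A i j)^2*w j*v j - 2*A i j*w i*v j))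
            - (∑ i, ∑ j, (2*(A j i)^2*w i*v i - 2*A j i*w j*v i))) := by
          simp [Finset.sum_add_distrib, Finset.sum_sub_distrib]
      _ = ∑ i, ∑ j, (2*w i*v i + 2*(A j i)^2*w i*v i - 2*(A i j + A j i)*w j*v i) := by
          have : (∑ i, ∑ j, (2*(A i j)^2*w j*v j - 2*A i j*w i*v j))
              = (∑ i, ∑ j, (2*(A j i)^2*w i*v i - 2*A j i*w j*v i)) := by
            rw [Finset.sum_comm]
          rw [this]; ring
      _ = ∑ i, (2*((n:ℝ)*w i + (∑ k, A k i ^ 2)*w i - ∑ j, (A i j + A j i)*w j)) * v i := by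
          apply Finset.sum_congr rfl
          intro i _
          have hb : (2:ℝ)*(∑ k : Fin n, A k i ^ 2)*w i*v i
              = ∑ j : Fin n, 2*(A j i)^2*w i*v i := by
            rw [Finset.mul_sum, Finset.sum_mul, Finset.sum_mul]
          have hc : ∑ j : Fin n, 2*(A i j + A j i)*w j*v i
              = 2 * (∑ j, (A i j + A j i)*w j) * v i := by
            rw [Finset.mul_sum, Finset.sum_mul]
            apply Finset.sum_congr rfl
            intro j _; ring
          rw [Finset.sum_sub_distrib, Finset.sum_add_distrib, ← hb, hc,
            Finset.sum_const, Finset.card_univ, Fintype.card_fin, nsmul_eq_mul]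
          ring
      _ = 2 * ((Gbar A).mulVec w ⬝ᵥ v) := by
          rw [dotProduct, Finset.mul_sum]
          apply Finset.sum_congr rfl
          intro i _
          rw [gbar_mulVec A hA w i]
          ring
  refine ⟨hder.differentiableAt, ?_, ?_⟩
  · intro v
    rw [hder.fderiv]
    exact hDval v
  · intro k
    rw [hder.fderiv, hDval (Pi.single k 1)]
    have hdp : (Gbar A).mulVec w ⬝ᵥ Pi.single k 1 = (Gbar A).mulVec w k := by
      simp [dotProduct_single]
    rw [hdp]
    have hfil : (Finset.univ.filter (fun i : Fin n => i ≠ k)) = Finset.univ.erase k :=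
      Finset.filter_ne' Finset.univ k
    have hmv : (Gbar A).mulVec w k = ∑ j, Gbar A k j * w j := by
      simp [Matrix.mulVec, dotProduct]
    rw [hmv, (Finset.add_sum_erase Finset.univ (fun j => Gbar A k j * w j) (Finset.mem_univ k)).symm]
    have hdiag : Gbar A k k = ((n : ℝ) - 1) + ∑ i ∈ Finset.univ.filter (fun i => i ≠ k), (A i k) ^ 2 := by
      simp [Gbar]
    have hoff : ∑ j ∈ Finset.univ.erase k, Gbar A k j * w j
        = -∑ i ∈ Finset.univ.filter (fun i => i ≠ k), (A i k + A k i) * w i := by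
      rw [hfil, ← Finset.sum_neg_distrib]
      apply Finset.sum_congr rfl
      intro j hj
      have hne : k ≠ j := fun h => (Finset.ne_of_mem_erase hj) h.symm
      simp [Gbar, hne]
      ring
    rw [hdiag, hoff]
    ring
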